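/- Let F be a field and θ0,θ1,θ2,θ0*,θ1*,θ2*,φ,ϕ ∈ F with θ0,θ1,θ2 pairwise distinct, θ0*,θ1*,θ2* pairwise distinct, and φ ≠ 0, ϕ ≠ 0. Define φ₁,φ₂,ϕ₁,ϕ₂ by φ₁ = (ϕ-φ)/((θ0-θ2)(θ0*-θ2*)) - (θ0-θ1)(θ0*-θ1*), φ₂ = (ϕ-φ)/((θ0-θ2)(θ0*-θ2*)) - (θ1-θ2)(θ1*-θ2*), ϕ₁ = (φ-ϕ)/((θ2-θ0)(θ0*-θ2*)) - (θ2-θ1)(θ0*-θ1*), ϕ₂ = (φ-ϕ)/((θ2-θ0)(θ0*-θ2*)) - (θ1-θ0)(θ1*-θ2*). Let B be the 4×4 matrix with rows (θ0,0,0,0),(1,θ1,0,0),(0,0,θ1,0),(0,1,φ₂,θ2) and let T be the 4×4 matrix with rows (φ, (θ0-θ2)φ, (θ0-θ2)φφ₁, (θ0-θ2)(θ0-θ1)φ), (0, φ, (θ0-θ2)(θ1*-θ0*)φ, (θ0-θ2)φ), (θ2*-θ0*, (θ2*-θ0*)(θ1-θ2), φ, 0), ((θ2*-θ0*)(θ2*-θ1*),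 (θ2*-θ0*)φ₂, (θ2*-θ0*)φ, φ). Then T is invertible and T⁻¹·B·T equals the matrix with rows (θ2,0,0,0), (1,θ1,0,0), (0,0,θ1,0), (0,1,φ₁,θ0). -/

import Mathlib

private lemma det_fin_four' {R : Type*} [CommRing R] (M : Matrix (Fin 4) (Fin 4) R) :
    M.det =
      M 0 0 * (M 1 1 * (M 2 2 * M 3 3 - M 2 3 * M 3 2) - M 1 2 * (M 2 1 * M 3 3 - M 2 3 * M 3 1)
        + M 1 3 * (M 2 1 * M 3 2 - M 2 2 * M 3 1))
    - M 0 1 * (M 1 0 * (M 2 2 * M 3 3 - M 2 3 * M 3 2) - M 1 2 * (M 2 0 * M 3 3 - M 2 3 * M 3 0)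
        + M 1 3 * (M 2 0 * M 3 2 - M 2 2 * M 3 0))
    + M 0 2 * (M 1 0 * (M 2 1 * M 3 3 - M 2 3 * M 3 1) - M 1 1 * (M 2 0 * M 3 3 - M 2 3 * M 3 0)
        + M 1 3 * (M 2 0 * M 3 1 - M 2 1 * M 3 0))
    - M 0 3 * (M 1 0 * (M 2 1 * M 3 2 - M 2 2 * M 3 1) - M 1 1 * (M 2 0 * M 3 2 - M 2 2 * M 3 0)
        + M 1 2 * (M 2 0 * M 3 1 - M 2 1 * M 3 0)) := by
  rw [Matrix.det_succ_row_zero]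
  simp [Fin.sum_univ_succ, Matrix.det_fin_three, Fin.succAbove, Matrix.submatrix_apply,
    show ((2:Fin 3).succ : Fin 4) = 3 from rfl, show ((2:Fin 3).castSucc : Fin 4) = 2 from rfl,
    show ((1:Fin 3).succ : Fin 4) = 2 from rfl, show ((0:Fin 3).succ : Fin 4) = 1 from rfl,
    show ((1:Fin 3).castSucc : Fin 4) = 1 from rfl, show ((0:Fin 3).castSucc : Fin 4) = 0 from rfl]
  ring

set_option maxHeartbeats 1000000 in
theorem stmt16 (F : Type*) [Field F]
    (θ0 θ1 θ2 θ0s θ1s θ2s φ ϕ : F)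
    (h01 : θ0 ≠ θ1) (h02 : θ0 ≠ θ2) (h12 : θ1 ≠ θ2)
    (h01s : θ0s ≠ θ1s) (h02s : θ0s ≠ θ2s) (h12s : θ1s ≠ θ2s)
    (hφ : φ ≠ 0) (hϕ : ϕ ≠ 0)
    (φ₁ φ₂ ϕ₁ ϕ₂ : F)
    (hφ₁ : φ₁ = (ϕ - φ) / ((θ0 - θ2) * (θ0s - θ2s)) - (θ0 - θ1) * (θ0s - θ1s))
    (hφ₂ : φ₂ = (ϕ - φ) / ((θ0 - θ2) * (θ0s - θ2s)) - (θ1 - θ2) * (θ1s - θ2s))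
    (hϕ₁ : ϕ₁ = (φ - ϕ) / ((θ2 - θ0) * (θ0s - θ2s)) - (θ2 - θ1) * (θ0s - θ1s))
    (hϕ₂ : ϕ₂ = (φ - ϕ) / ((θ2 - θ0) * (θ0s - θ2s)) - (θ1 - θ0) * (θ1s - θ2s))
    (B T : Matrix (Fin 4) (Fin 4) F)
    (hB : B = !![θ0, 0, 0, 0; 1, θ1, 0, 0; 0, 0, θ1, 0; 0, 1, φ₂, θ2])
    (hT : T = !![φ, (θ0 - θ2) * φ, (θ0 - θ2) * φ * φ₁, (θ0 - θ2) * (θ0 - θ1) * φ;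
                 0, φ, (θ0 - θ2) * (θ1s - θ0s) * φ, (θ0 - θ2) * φ;
                 θ2s - θ0s, (θ2s - θ0s) * (θ1 - θ2), φ, 0;
                 (θ2s - θ0s) * (θ2s - θ1s), (θ2s - θ0s) * φ₂, (θ2s - θ0s) * φ, φ]) :
    IsUnit T ∧
      T⁻¹ * B * T = !![θ2, 0, 0, 0; 1, θ1, 0, 0; 0, 0, θ1, 0; 0, 1, φ₁, θ0] := by
  have h02' : θ0 - θ2 ≠ 0 := sub_ne_zero.mpr h02
  have h02s' : θ0s - θ2s ≠ 0 := sub_ne_zero.mpr h02s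
  set q : F := (ϕ - φ) / ((θ0 - θ2) * (θ0s - θ2s)) with hq
  have hϕq : ϕ = φ + (θ0 - θ2) * (θ0s - θ2s) * q := by
    rw [hq]
    field_simp
    ring
  have hφ₁' : φ₁ = q - (θ0 - θ1) * (θ0s - θ1s) := hφ₁
  have hφ₂' : φ₂ = q - (θ1 - θ2) * (θ1s - θ2s) := hφ₂
  clear hφ₁ hφ₂ hϕ₁ hϕ₂ hq
  subst hφ₁' hφ₂'
  have hdet : T.det = φ ^ 2 * (φ + (θ0 - θ2) * (θ0s - θ2s) * q) ^ 2 := by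
    rw [hT, det_fin_four']
    simp [Matrix.vecHead, Matrix.vecTail]
    ring
  have hunit : IsUnit T := by
    rw [Matrix.isUnit_iff_isUnit_det, hdet, ← hϕq]
    exact (mul_ne_zero (pow_ne_zero 2 hφ) (pow_ne_zero 2 hϕ)).isUnit
  refine ⟨hunit, ?_⟩
  have hBT : B * T = T * !![θ2, 0, 0, 0; 1, θ1, 0, 0; 0, 0, θ1, 0;
      0, 1, q - (θ0 - θ1) * (θ0s - θ1s), θ0] := by
    rw [hB, hT]
    ext i j
    fin_cases i <;> fin_cases j <;>
      simp [Matrix.mul_apply, Fin.sum_univ_four, Matrix.vecHead, Matrix.vecTail] <;> ring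
  rw [mul_assoc, hBT, ← mul_assoc, Matrix.nonsing_inv_mul T
    ((Matrix.isUnit_iff_isUnit_det T).mp hunit), one_mul]
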